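/- arXiv:1708.04727 — 9 statements merged into one kernel-verified Lean document; each statement's English description precedes it below -/
import Mathlib

section
/- The network distance dN(X,Y) := (1/2) inf over correspondences R of dis(R) satisfies the triangle inequality: for all networks X, Y, Z, dN(X,Z) ≤ dN(X,Y) + dN(Y,Z). -/
open scoped ENNReal
open Function

/-- A correspondence between `X` and `Y`: a relation with full projections. -/
def IsCorrespondence {X Y : Type*} (R : Set (X × Y)) : Prop :=
  (∀ x : X, ∃ y : Y, (x, y) ∈ R) ∧ (∀ y : Y, ∃ x : X, (x, y) ∈ R)

/-- Distortion of a relation between two networks. -/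
noncomputable def dis {X Y : Type*} (ωX : X → X → ℝ) (ωY : Y → Y → ℝ)
    (R : Set (X × Y)) : ℝ≥0∞ :=
  ⨆ p ∈ R, ⨆ q ∈ R, (‖ωX p.1 q.1 - ωY p.2 q.2‖₊ : ℝ≥0∞)

/-- The network distance. -/
noncomputable def dN {X Y : Type*} (ωX : X → X → ℝ) (ωY : Y → Y → ℝ) : ℝ≥0∞ :=
  (1/2) * ⨅ R ∈ {R : Set (X × Y) | IsCorrespondence R}, dis ωX ωY R

def netCompRel {X Y Z : Type*} (R : Set (X × Y)) (S : Set (Y × Z)) : Set (X × Z) :=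
  {p | ∃ y, (p.1, y) ∈ R ∧ (y, p.2) ∈ S}

lemma netCompRel_corr {X Y Z : Type*} {R : Set (X × Y)} {S : Set (Y × Z)}
    (hR : IsCorrespondence R) (hS : IsCorrespondence S) :
    IsCorrespondence (netCompRel R S) := by
  constructor
  · intro x
    obtain ⟨y, hy⟩ := hR.1 x
    obtain ⟨z, hz⟩ := hS.1 y
    exact ⟨z, y, hy, hz⟩
  · intro z
    obtain ⟨y, hy⟩ := hS.2 z
    obtain ⟨x, hx⟩ := hR.2 y
    exact ⟨x, y, hx, hy⟩

lemma le_dis {X Y : Type*} (ωX : X → X → ℝ) (ωY : Y → Y → ℝ) {R : Set (X × Y)}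
    {p q : X × Y} (hp : p ∈ R) (hq : q ∈ R) :
    (‖ωX p.1 q.1 - ωY p.2 q.2‖₊ : ℝ≥0∞) ≤ dis ωX ωY R := by
  refine le_trans ?_ (le_iSup₂ (f := fun p (_ : p ∈ R) => ⨆ q ∈ R, (‖ωX p.1 q.1 - ωY p.2 q.2‖₊ : ℝ≥0∞)) p hp)
  exact le_iSup₂ (f := fun q (_ : q ∈ R) => (‖ωX p.1 q.1 - ωY p.2 q.2‖₊ : ℝ≥0∞)) q hq

lemma dis_comp {X Y Z : Type*} (ωX : X → X → ℝ) (ωY : Y → Y → ℝ) (ωZ : Z → Z → ℝ)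
    (R : Set (X × Y)) (S : Set (Y × Z)) :
    dis ωX ωZ (netCompRel R S) ≤ dis ωX ωY R + dis ωY ωZ S := by
  refine iSup₂_le fun p hp => iSup₂_le fun q hq => ?_
  obtain ⟨y, hy1, hy2⟩ := hp
  obtain ⟨y', hy1', hy2'⟩ := hq
  have key : (‖ωX p.1 q.1 - ωZ p.2 q.2‖₊ : ℝ≥0∞) ≤
      (‖ωX p.1 q.1 - ωY y y'‖₊ : ℝ≥0∞) + (‖ωY y y' - ωZ p.2 q.2‖₊ : ℝ≥0∞) := by
    rw [← ENNReal.coe_add]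
    exact ENNReal.coe_le_coe.mpr (by
      have : ωX p.1 q.1 - ωZ p.2 q.2 = (ωX p.1 q.1 - ωY y y') + (ωY y y' - ωZ p.2 q.2) := by ring
      rw [this]; exact nnnorm_add_le _ _)
  refine key.trans (add_le_add ?_ ?_)
  · exact le_dis ωX ωY (p := (p.1, y)) (q := (q.1, y')) hy1 hy1'
  · exact le_dis ωY ωZ (p := (y, p.2)) (q := (y', q.2)) hy2 hy2'

theorem dN_triangle {X Y Z : Type*} (ωX : X → X → ℝ) (ωY : Y → Y → ℝ) (ωZ : Z → Z → ℝ) :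
    dN ωX ωZ ≤ dN ωX ωY + dN ωY ωZ := by
  by_cases hXY : ∃ R : Set (X × Y), IsCorrespondence R
  · by_cases hYZ : ∃ S : Set (Y × Z), IsCorrespondence S
    · have hC1 : Nonempty {R : Set (X × Y) // IsCorrespondence R} :=
        ⟨⟨hXY.choose, hXY.choose_spec⟩⟩
      have hC2 : Nonempty {S : Set (Y × Z) // IsCorrespondence S} :=
        ⟨⟨hYZ.choose, hYZ.choose_spec⟩⟩
      have key : ∀ (R : {R : Set (X × Y) // IsCorrespondence R})
          (S : {S : Set (Y × Z) // IsCorrespondence S}),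
          dN ωX ωZ ≤ (1/2) * dis ωX ωY R.1 + (1/2) * dis ωY ωZ S.1 := by
        intro R S
        have h1 : dN ωX ωZ ≤ (1/2) * dis ωX ωZ (netCompRel R.1 S.1) := by
          refine mul_le_mul_right ?_ _
          exact iInf₂_le _ (netCompRel_corr R.2 S.2)
        refine h1.trans ?_
        rw [← mul_add]
        exact mul_le_mul_right (dis_comp ωX ωY ωZ R.1 S.1) _
      have e1 : dN ωX ωY = ⨅ R : {R : Set (X × Y) // IsCorrespondence R}, (1/2) * dis ωX ωY R.1 := by
        unfold dN
        rw [iInf_subtype' (p := fun R : Set (X × Y) => R ∈ {R | IsCorrespondence R}),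
          ENNReal.mul_iInf_of_ne (by norm_num) (by norm_num)]
        rfl
      have e2 : dN ωY ωZ = ⨅ S : {S : Set (Y × Z) // IsCorrespondence S}, (1/2) * dis ωY ωZ S.1 := by
        unfold dN
        rw [iInf_subtype' (p := fun S : Set (Y × Z) => S ∈ {S | IsCorrespondence S}),
          ENNReal.mul_iInf_of_ne (by norm_num) (by norm_num)]
        rfl
      rw [e1, e2, ENNReal.iInf_add]
      refine le_iInf fun R => ?_
      rw [ENNReal.add_iInf]
      exact le_iInf fun S => key R S
    · have h : (⨅ S ∈ {S : Set (Y × Z) | IsCorrespondence S}, dis ωY ωZ S) = ⊤ := by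
        rw [iInf₂_eq_top]; intro S hS; exact absurd ⟨S, hS⟩ hYZ
      have : dN ωY ωZ = ⊤ := by
        unfold dN; rw [h, ENNReal.mul_top (by norm_num)]
      simp [this]
  · have h : (⨅ R ∈ {R : Set (X × Y) | IsCorrespondence R}, dis ωX ωY R) = ⊤ := by
      rw [iInf₂_eq_top]; intro R hR; exact absurd ⟨R, hR⟩ hXY
    have : dN ωX ωY = ⊤ := by
      unfold dN; rw [h, ENNReal.mul_top (by norm_num)]
    simp [this]
end

section
/- Two networks X and Y satisfy dN(X,Y) = 0 if and only if they are Type II weakly isomorphic, i.e., for every ε > 0 there is a set Z with surjections φX : Z → X and φY : Z → Y such that |ωX(φX(z),φX(z')) − ωY(φY(z),φY(z'))| < ε for all z,z' ∈ Z. -/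
open scoped ENNReal
open Function

universe u

theorem dN_eq_zero_iff_typeII {X Y : Type u} (ωX : X → X → ℝ) (ωY : Y → Y → ℝ) :
    dN ωX ωY = 0 ↔
      ∀ ε : ℝ, 0 < ε → ∃ (Z : Type u) (φX : Z → X) (φY : Z → Y),
        Surjective φX ∧ Surjective φY ∧
        ∀ z z' : Z, |ωX (φX z) (φX z') - ωY (φY z) (φY z')| < ε := by
  have hhalf : (1/2 : ℝ≥0∞) ≠ 0 := by norm_num
  have hkey : dN ωX ωY = 0 ↔
      (⨅ R ∈ {R : Set (X × Y) | IsCorrespondence R}, dis ωX ωY R) = 0 := by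
    rw [dN, mul_eq_zero]
    simp [hhalf]
  rw [hkey]
  constructor
  · intro h ε hε
    have hlt : (⨅ R ∈ {R : Set (X × Y) | IsCorrespondence R}, dis ωX ωY R)
        < ENNReal.ofReal ε := by
      rw [h]; exact ENNReal.ofReal_pos.mpr hε
    rw [iInf_lt_iff] at hlt
    obtain ⟨R, hlt⟩ := hlt
    rw [iInf_lt_iff] at hlt
    obtain ⟨hR, hRlt⟩ := hlt
    refine ⟨R, fun z => z.1.1, fun z => z.1.2, ?_, ?_, ?_⟩
    · intro x
      obtain ⟨y, hy⟩ := hR.1 x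
      exact ⟨⟨(x, y), hy⟩, rfl⟩
    · intro y
      obtain ⟨x, hx⟩ := hR.2 y
      exact ⟨⟨(x, y), hx⟩, rfl⟩
    · intro z z'
      have hle : (‖ωX z.1.1 z'.1.1 - ωY z.1.2 z'.1.2‖₊ : ℝ≥0∞) ≤ dis ωX ωY R := by
        refine le_trans ?_ (le_iSup₂ (f := fun p (_ : p ∈ R) =>
          ⨆ q ∈ R, (‖ωX p.1 q.1 - ωY p.2 q.2‖₊ : ℝ≥0∞)) z.1 z.2)
        exact le_iSup₂ (f := fun q (_ : q ∈ R) =>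
          (‖ωX z.1.1 q.1 - ωY z.1.2 q.2‖₊ : ℝ≥0∞)) z'.1 z'.2
      have := lt_of_le_of_lt hle hRlt
      rw [ENNReal.ofReal] at this
      have h2 : ‖ωX z.1.1 z'.1.1 - ωY z.1.2 z'.1.2‖₊ < ε.toNNReal := by
        exact_mod_cast this
      have h3 : ‖ωX z.1.1 z'.1.1 - ωY z.1.2 z'.1.2‖ < ε := by
        calc ‖ωX z.1.1 z'.1.1 - ωY z.1.2 z'.1.2‖
            = ((‖ωX z.1.1 z'.1.1 - ωY z.1.2 z'.1.2‖₊ : NNReal) : ℝ) := (coe_nnnorm _).symm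
          _ < ((ε.toNNReal : NNReal) : ℝ) := by exact_mod_cast h2
          _ = ε := Real.coe_toNNReal ε hε.le
      simpa [Real.norm_eq_abs] using h3
  · intro h
    refine le_antisymm ?_ zero_le
    refine ENNReal.le_of_forall_pos_le_add fun δ hδ _ => ?_
    obtain ⟨Z, φX, φY, hsX, hsY, hb⟩ := h δ (by exact_mod_cast hδ)
    set R : Set (X × Y) := Set.range (fun z => (φX z, φY z)) with hRdef
    have hR : IsCorrespondence R := by
      constructor
      · intro x
        obtain ⟨z, hz⟩ := hsX x
        exact ⟨φY z, ⟨z, by simp [hz]⟩⟩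
      · intro y
        obtain ⟨z, hz⟩ := hsY y
        exact ⟨φX z, ⟨z, by simp [hz]⟩⟩
    have hdis : dis ωX ωY R ≤ ENNReal.ofReal δ := by
      refine iSup₂_le fun p hp => iSup₂_le fun q hq => ?_
      obtain ⟨z, hz⟩ := hp
      obtain ⟨z', hz'⟩ := hq
      subst hz; subst hz'
      rw [← ENNReal.ofReal_coe_nnreal, coe_nnnorm]
      exact ENNReal.ofReal_le_ofReal (by simpa [Real.norm_eq_abs] using (hb z z').le)
    calc (⨅ R ∈ {R : Set (X × Y) | IsCorrespondence R}, dis ωX ωY R)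
        ≤ dis ωX ωY R := iInf₂_le R hR
      _ ≤ ENNReal.ofReal δ := hdis
      _ ≤ 0 + δ := by simp [ENNReal.ofReal_coe_nnreal]
end

section
/- Type II weak isomorphism is transitive: if for every ε>0 there exist a set P and surjections φA : P → A, φB : P → B with |ωA(φA(p),φA(p')) − ωB(φB(p),φB(p'))| < ε for all p,p'∈P, and similarly for B and C, then the same holds for A and C. -/
open Function

universe u

theorem typeII_trans {A B C : Type u}
    (ωA : A → A → ℝ) (ωB : B → B → ℝ) (ωC : C → C → ℝ)
    (hAB : ∀ ε : ℝ, 0 < ε → ∃ (P : Type u) (φA : P → A) (φB : P → B),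
      Surjective φA ∧ Surjective φB ∧
      ∀ p p' : P, |ωA (φA p) (φA p') - ωB (φB p) (φB p')| < ε)
    (hBC : ∀ ε : ℝ, 0 < ε → ∃ (S : Type u) (ψB : S → B) (ψC : S → C),
      Surjective ψB ∧ Surjective ψC ∧
      ∀ s s' : S, |ωB (ψB s) (ψB s') - ωC (ψC s) (ψC s')| < ε) :
    ∀ ε : ℝ, 0 < ε → ∃ (T : Type u) (χA : T → A) (χC : T → C),
      Surjective χA ∧ Surjective χC ∧
      ∀ t t' : T, |ωA (χA t) (χA t') - ωC (χC t) (χC t')| < ε := by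
  intro ε hε
  obtain ⟨P, φA, φB, hφA, hφB, hP⟩ := hAB (ε/2) (by linarith)
  obtain ⟨S, ψB, ψC, hψB, hψC, hS⟩ := hBC (ε/2) (by linarith)
  refine ⟨{x : P × S // φB x.1 = ψB x.2}, fun t => φA t.1.1, fun t => ψC t.1.2, ?_, ?_, ?_⟩
  · intro a
    obtain ⟨p, hp⟩ := hφA a
    obtain ⟨s, hs⟩ := hψB (φB p)
    exact ⟨⟨(p, s), hs.symm⟩, hp⟩
  · intro c
    obtain ⟨s, hs⟩ := hψC c
    obtain ⟨p, hp⟩ := hφB (ψB s)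
    exact ⟨⟨(p, s), hp⟩, hs⟩
  · rintro ⟨⟨p, s⟩, h⟩ ⟨⟨p', s'⟩, h'⟩
    have h1 := hP p p'
    have h2 := hS s s'
    simp only at h ⊢
    rw [h, h'] at h1
    calc |ωA (φA p) (φA p') - ωC (ψC s) (ψC s')|
        ≤ |ωA (φA p) (φA p') - ωB (ψB s) (ψB s')| +
          |ωB (ψB s) (ψB s') - ωC (ψC s) (ψC s')| := abs_sub_le _ _ _
      _ < ε/2 + ε/2 := by exact add_lt_add h1 h2
      _ = ε := by ring
end

section
/- For finite networks X and Y, Type I weak isomorphism and Type II weak isomorphism are equivalent: there exists a set Z with surjections φX : Z → X, φY : Z → Y such that ωX(φX(z),φX(z')) = ωY(φY(z),φY(z')) for all z,z' ∈ Z if and only if for every ε > 0 such surjections exist with |ωX(φX(z),φX(z')) − ωY(φY(z),φY(z'))| < ε for all z,z' ∈ Z. -/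
open Function

universe u

theorem typeI_iff_typeII_of_finite {X Y : Type u} [Fintype X] [Fintype Y]
    (ωX : X → X → ℝ) (ωY : Y → Y → ℝ) :
    (∃ (Z : Type u) (φX : Z → X) (φY : Z → Y),
      Surjective φX ∧ Surjective φY ∧
      ∀ z z' : Z, ωX (φX z) (φX z') = ωY (φY z) (φY z')) ↔
    (∀ ε : ℝ, 0 < ε → ∃ (Z : Type u) (φX : Z → X) (φY : Z → Y),
      Surjective φX ∧ Surjective φY ∧
      ∀ z z' : Z, |ωX (φX z) (φX z') - ωY (φY z) (φY z')| < ε) := by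
  constructor
  · rintro ⟨Z, φX, φY, hX, hY, h⟩ ε hε
    exact ⟨Z, φX, φY, hX, hY, fun z z' => by simp [h z z', hε]⟩
  · intro h
    -- predicate on correspondences
    let P : Set (X × Y) → ℝ → Prop := fun R ε =>
      (∀ x, ∃ p ∈ R, p.1 = x) ∧ (∀ y, ∃ p ∈ R, p.2 = y) ∧
      ∀ p ∈ R, ∀ q ∈ R, |ωX p.1 q.1 - ωY p.2 q.2| < ε
    have hP : ∀ n : ℕ, ∃ R, P R (1 / (n + 1)) := by
      intro n
      obtain ⟨Z, φX, φY, hX, hY, hb⟩ := h (1 / (n + 1)) (by positivity)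
      refine ⟨Set.range fun z => (φX z, φY z), ?_, ?_, ?_⟩
      · intro x; obtain ⟨z, hz⟩ := hX x; exact ⟨(φX z, φY z), ⟨z, rfl⟩, hz⟩
      · intro y; obtain ⟨z, hz⟩ := hY y; exact ⟨(φX z, φY z), ⟨z, rfl⟩, hz⟩
      · rintro p ⟨z, rfl⟩ q ⟨z', rfl⟩; exact hb z z'
    choose f hf using hP
    obtain ⟨R, hR⟩ := Finite.exists_infinite_fiber f
    have hRinf : (f ⁻¹' {R}).Infinite := Set.infinite_coe_iff.mp hR
    have hRall : ∀ ε : ℝ, 0 < ε → P R ε := by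
      intro ε hε
      obtain ⟨n, hn⟩ := exists_nat_one_div_lt hε
      obtain ⟨m, hm, hmn⟩ := hRinf.exists_gt n
      have hm' : f m = R := hm
      have hfm := hf m
      rw [hm'] at hfm
      refine ⟨hfm.1, hfm.2.1, fun p hp q hq => lt_of_lt_of_le (hfm.2.2 p hp q hq) ?_⟩
      calc (1 : ℝ) / (m + 1) ≤ 1 / (n + 1) := by
            apply one_div_le_one_div_of_le (by positivity)
            have : (n : ℝ) ≤ m := by exact_mod_cast hmn.le
            linarith
        _ ≤ ε := hn.le
    have h1 := hRall 1 one_pos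
    refine ⟨{p : X × Y // p ∈ R}, fun p => p.1.1, fun p => p.1.2, ?_, ?_, ?_⟩
    · intro x; obtain ⟨p, hp, he⟩ := h1.1 x; exact ⟨⟨p, hp⟩, he⟩
    · intro y; obtain ⟨p, hp, he⟩ := h1.2.1 y; exact ⟨⟨p, hp⟩, he⟩
    · intro z z'
      by_contra hne
      have hpos : 0 < |ωX z.1.1 z'.1.1 - ωY z.1.2 z'.1.2| := by
        rw [abs_pos, sub_ne_zero]; exact hne
      exact absurd ((hRall _ hpos).2.2 z.1 z.2 z'.1 z'.2) (lt_irrefl _)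
end

section
/- The trace invariant is 2-Lipschitz: for finite networks X and Y, the Hausdorff distance in ℝ between tr(X) = {ωX(x,x) : x ∈ X} and tr(Y) = {ωY(y,y) : y ∈ Y} is at most 2 dN(X,Y). -/
open scoped ENNReal
open Function

theorem trace_lipschitz {X Y : Type*} [Fintype X] [Fintype Y]
    [Nonempty X] [Nonempty Y] (ωX : X → X → ℝ) (ωY : Y → Y → ℝ) :
    EMetric.hausdorffEdist {r : ℝ | ∃ x : X, r = ωX x x}
      {r : ℝ | ∃ y : Y, r = ωY y y} ≤ 2 * dN ωX ωY := by
  rw [dN, ← mul_assoc]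
  have h2 : (2 : ℝ≥0∞) * (1/2) = 1 := by
    rw [one_div, ENNReal.mul_inv_cancel] <;> simp
  rw [h2, one_mul]
  refine le_iInf₂ fun R hR => ?_
  obtain ⟨h1, h2'⟩ := hR
  have key : ∀ (x : X) (y : Y), (x, y) ∈ R →
      edist (ωX x x) (ωY y y) ≤ dis ωX ωY R := by
    intro x y hxy
    rw [edist_eq_enorm_sub]
    calc (‖ωX x x - ωY y y‖₊ : ℝ≥0∞)
        ≤ ⨆ q ∈ R, (‖ωX x q.1 - ωY y q.2‖₊ : ℝ≥0∞) :=
          le_iSup₂ (f := fun q (_ : q ∈ R) => (‖ωX x q.1 - ωY y q.2‖₊ : ℝ≥0∞)) (x, y) hxy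
      _ ≤ dis ωX ωY R :=
          le_iSup₂ (f := fun p (_ : p ∈ R) => ⨆ q ∈ R, (‖ωX p.1 q.1 - ωY p.2 q.2‖₊ : ℝ≥0∞)) (x, y) hxy
  refine EMetric.hausdorffEdist_le_of_infEdist ?_ ?_
  · rintro r ⟨x, rfl⟩
    obtain ⟨y, hy⟩ := h1 x
    exact le_trans (EMetric.infEdist_le_edist_of_mem ⟨y, rfl⟩) (key x y hy)
  · rintro r ⟨y, rfl⟩
    obtain ⟨x, hx⟩ := h2' y
    exact le_trans (EMetric.infEdist_le_edist_of_mem ⟨x, rfl⟩)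
      (by rw [edist_comm]; exact key x y hx)
end

section
/- The spectrum is 2-Lipschitz: for finite networks X and Y, the Hausdorff distance in ℝ between spec(X) = {ωX(x,x') : x,x' ∈ X} and spec(Y) = {ωY(y,y') : y,y' ∈ Y} is at most 2 dN(X,Y). -/
open scoped ENNReal
open Function

theorem spec_lipschitz {X Y : Type*} [Fintype X] [Fintype Y]
    [Nonempty X] [Nonempty Y] (ωX : X → X → ℝ) (ωY : Y → Y → ℝ) :
    EMetric.hausdorffEdist {r : ℝ | ∃ x x' : X, r = ωX x x'}
      {r : ℝ | ∃ y y' : Y, r = ωY y y'} ≤ 2 * dN ωX ωY := by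
  have h2 : 2 * dN ωX ωY = ⨅ R ∈ {R : Set (X × Y) | IsCorrespondence R}, dis ωX ωY R := by
    have h1 : (2 : ℝ≥0∞) * (1/2) = 1 := by
      rw [one_div, ENNReal.mul_inv_cancel] <;> norm_num
    rw [dN, ← mul_assoc, h1, one_mul]
  rw [h2]
  refine le_iInf₂ fun R hR => ?_
  refine EMetric.hausdorffEdist_le_of_mem_edist ?_ ?_
  · rintro r ⟨x, x', rfl⟩
    obtain ⟨y, hy⟩ := hR.1 x
    obtain ⟨y', hy'⟩ := hR.1 x'
    refine ⟨ωY y y', ⟨y, y', rfl⟩, ?_⟩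
    calc edist (ωX x x') (ωY y y') = (‖ωX x x' - ωY y y'‖₊ : ℝ≥0∞) :=
          edist_eq_enorm_sub _ _
      _ ≤ dis ωX ωY R := le_iSup₂_of_le (x, y) hy (le_iSup₂_of_le (x', y') hy' le_rfl)
  · rintro r ⟨y, y', rfl⟩
    obtain ⟨x, hx⟩ := hR.2 y
    obtain ⟨x', hx'⟩ := hR.2 y'
    refine ⟨ωX x x', ⟨x, x', rfl⟩, ?_⟩
    rw [edist_comm]
    calc edist (ωX x x') (ωY y y') = (‖ωX x x' - ωY y y'‖₊ : ℝ≥0∞) :=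
          edist_eq_enorm_sub _ _
      _ ≤ dis ωX ωY R := le_iSup₂_of_le (x, y) hx (le_iSup₂_of_le (x', y') hx' le_rfl)
end

section
/- The out-invariant is 2-Lipschitz: for finite networks X and Y, the Hausdorff distance in ℝ between out(X) = {max_{x'∈X}|ωX(x,x')| : x∈X} and out(Y) = {max_{y'∈Y}|ωY(y,y')| : y∈Y} is at most 2 dN(X,Y). Moreover the local version holds: 2 dN(X,Y) ≥ inf over correspondences R of sup_{(x,y)∈R} |outX(x) − outY(y)|, where outX(x) = max_{x'∈X}|ωX(x,x')|. -/
open scoped ENNReal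
open Function

/-- The out-map of a finite network. -/
noncomputable def outMap {X : Type*} [Fintype X] (ωX : X → X → ℝ) (x : X) : ℝ :=
  ⨆ x' : X, |ωX x x'|

lemma edist_outMap_le {X Y : Type*} [Fintype X] [Fintype Y]
    [Nonempty X] [Nonempty Y] (ωX : X → X → ℝ) (ωY : Y → Y → ℝ)
    (R : Set (X × Y)) (hR : IsCorrespondence R) {p : X × Y} (hp : p ∈ R) :
    edist (outMap ωX p.1) (outMap ωY p.2) ≤ dis ωX ωY R := by
  rcases eq_or_ne (dis ωX ωY R) ⊤ with h | h
  · simp [h]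
  have key : ∀ q ∈ R, ∀ q' ∈ R, |ωX q.1 q'.1 - ωY q.2 q'.2| ≤ (dis ωX ωY R).toReal := by
    intro q hq q' hq'
    have h1 : (‖ωX q.1 q'.1 - ωY q.2 q'.2‖₊ : ℝ≥0∞) ≤ dis ωX ωY R := by
      refine le_trans ?_ (le_iSup₂ (f := fun q (_ : q ∈ R) =>
        ⨆ q' ∈ R, (‖ωX q.1 q'.1 - ωY q.2 q'.2‖₊ : ℝ≥0∞)) q hq)
      exact le_iSup₂ (f := fun q' (_ : q' ∈ R) =>
        (‖ωX q.1 q'.1 - ωY q.2 q'.2‖₊ : ℝ≥0∞)) q' hq'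
    have := ENNReal.toReal_mono h h1
    simpa [Real.norm_eq_abs] using this
  have hb : |outMap ωX p.1 - outMap ωY p.2| ≤ (dis ωX ωY R).toReal := by
    rw [abs_sub_le_iff]
    constructor
    · rw [sub_le_iff_le_add]
      refine ciSup_le fun x' => ?_
      obtain ⟨y', hy'⟩ := hR.1 x'
      have h2 : |ωX p.1 x' - ωY p.2 y'| ≤ (dis ωX ωY R).toReal := key p hp (x', y') hy'
      have h3 : |ωY p.2 y'| ≤ outMap ωY p.2 :=
        le_ciSup (f := fun y'' => |ωY p.2 y''|)
          (Set.Finite.bddAbove (Set.finite_range _)) y'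
      have h4 := abs_sub_abs_le_abs_sub (ωX p.1 x') (ωY p.2 y')
      linarith
    · rw [sub_le_iff_le_add]
      refine ciSup_le fun y' => ?_
      obtain ⟨x', hx'⟩ := hR.2 y'
      have h2 : |ωX p.1 x' - ωY p.2 y'| ≤ (dis ωX ωY R).toReal := key p hp (x', y') hx'
      have h3 : |ωX p.1 x'| ≤ outMap ωX p.1 :=
        le_ciSup (f := fun x'' => |ωX p.1 x''|)
          (Set.Finite.bddAbove (Set.finite_range _)) x'
      have h4 := abs_sub_abs_le_abs_sub (ωY p.2 y') (ωX p.1 x')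
      rw [abs_sub_comm] at h4
      linarith
  rw [edist_dist, Real.dist_eq]
  exact ENNReal.ofReal_le_of_le_toReal hb

theorem out_lipschitz {X Y : Type*} [Fintype X] [Fintype Y]
    [Nonempty X] [Nonempty Y] (ωX : X → X → ℝ) (ωY : Y → Y → ℝ) :
    EMetric.hausdorffEdist (Set.range (outMap ωX)) (Set.range (outMap ωY))
        ≤ 2 * dN ωX ωY ∧
    (⨅ R ∈ {R : Set (X × Y) | IsCorrespondence R},
        ⨆ p ∈ R, edist (outMap ωX p.1) (outMap ωY p.2)) ≤ 2 * dN ωX ωY := by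
  have h2 : 2 * dN ωX ωY = ⨅ R ∈ {R : Set (X × Y) | IsCorrespondence R}, dis ωX ωY R := by
    rw [dN, ← mul_assoc]
    norm_num
    rw [ENNReal.mul_inv_cancel two_ne_zero (by norm_num), one_mul]
  rw [h2]
  constructor
  · refine le_iInf₂ fun R hR => ?_
    refine le_trans (EMetric.hausdorffEdist_le_of_mem_edist
      (r := ⨆ p ∈ R, edist (outMap ωX p.1) (outMap ωY p.2)) ?_ ?_) ?_
    · rintro _ ⟨a, rfl⟩
      obtain ⟨b, hb⟩ := hR.1 a
      exact ⟨outMap ωY b, Set.mem_range_self b,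
        le_iSup₂ (f := fun p (_ : p ∈ R) => edist (outMap ωX p.1) (outMap ωY p.2)) (a, b) hb⟩
    · rintro _ ⟨b, rfl⟩
      obtain ⟨a, ha⟩ := hR.2 b
      refine ⟨outMap ωX a, Set.mem_range_self a, ?_⟩
      rw [edist_comm]
      exact le_iSup₂ (f := fun p (_ : p ∈ R) => edist (outMap ωX p.1) (outMap ωY p.2)) (a, b) ha
    · exact iSup₂_le fun p hp => edist_outMap_le ωX ωY R hR hp
  · exact iInf₂_mono fun R hR => iSup₂_le fun p hp => edist_outMap_le ωX ωY R hR hp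
end

section
/- For finite networks X and Y and any functions fX : X → ℝ, fY : Y → ℝ, the Hausdorff distance in ℝ between the images fX(X) and fY(Y) equals the infimum over correspondences R ⊆ X×Y of sup_{(x,y)∈R} |fX(x) − fY(y)|. -/
open scoped ENNReal
open Function

theorem hausdorff_eq_inf_corr {X Y : Type*} [Fintype X] [Fintype Y]
    [Nonempty X] [Nonempty Y] (fX : X → ℝ) (fY : Y → ℝ) :
    EMetric.hausdorffEdist (Set.range fX) (Set.range fY)
      = ⨅ R ∈ {R : Set (X × Y) | IsCorrespondence R},
          ⨆ p ∈ R, edist (fX p.1) (fY p.2) := by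
  set H := EMetric.hausdorffEdist (Set.range fX) (Set.range fY) with hH
  apply le_antisymm
  · refine le_iInf₂ fun R hR => ?_
    obtain ⟨h1, h2⟩ := hR
    apply EMetric.hausdorffEdist_le_of_mem_edist
    · rintro _ ⟨x, rfl⟩
      obtain ⟨y, hy⟩ := h1 x
      exact ⟨fY y, Set.mem_range_self y, le_iSup₂_of_le (x, y) hy le_rfl⟩
    · rintro _ ⟨y, rfl⟩
      obtain ⟨x, hx⟩ := h2 y
      refine ⟨fX x, Set.mem_range_self x, le_iSup₂_of_le (x, y) hx ?_⟩
      rw [edist_comm]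
  · set R : Set (X × Y) := {p | edist (fX p.1) (fY p.2) ≤ H} with hRdef
    have hR : IsCorrespondence R := by
      constructor
      · intro x
        obtain ⟨y, hy⟩ := Finite.exists_min fun y => edist (fX x) (fY y)
        refine ⟨y, ?_⟩
        have h1 : edist (fX x) (fY y) = EMetric.infEdist (fX x) (Set.range fY) := by
          rw [EMetric.infEdist, Metric.infEDist]
          rw [iInf_range]
          exact le_antisymm (le_iInf hy) (iInf_le _ y)
        show edist (fX x) (fY y) ≤ H
        rw [h1]
        exact EMetric.infEdist_le_hausdorffEdist_of_mem (Set.mem_range_self x)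
      · intro y
        obtain ⟨x, hx⟩ := Finite.exists_min fun x => edist (fY y) (fX x)
        refine ⟨x, ?_⟩
        have h1 : edist (fY y) (fX x) = EMetric.infEdist (fY y) (Set.range fX) := by
          rw [EMetric.infEdist, Metric.infEDist]
          rw [iInf_range]
          exact le_antisymm (le_iInf hx) (iInf_le _ x)
        show edist (fX x) (fY y) ≤ H
        rw [edist_comm, h1, hH, EMetric.hausdorffEdist, Metric.hausdorffEDist_comm]
        exact EMetric.infEdist_le_hausdorffEdist_of_mem (Set.mem_range_self y)
    refine iInf₂_le_of_le R hR ?_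
    exact iSup₂_le fun p hp => hp
end

section
/- For each n ∈ ℕ, the n-motif-set invariant is 2-Lipschitz: for finite networks X and Y, the Hausdorff distance with respect to the ℓ∞ metric on n×n real matrices between Mn(X) = {(ωX(xi,xj))_{i,j} : x1,…,xn ∈ X} and Mn(Y) = {(ωY(yi,yj))_{i,j} : y1,…,yn ∈ Y} is at most 2 dN(X,Y). -/
open scoped ENNReal
open Function

/-- The `n`-motif set of a network: all `n × n` weight matrices of `n`-tuples. -/
def motifSet {X : Type*} (ωX : X → X → ℝ) (n : ℕ) : Set (Fin n → Fin n → ℝ) :=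
  Set.range fun f : Fin n → X => fun i j => ωX (f i) (f j)


lemma infEdist_motif_le {X Y : Type*} (ωX : X → X → ℝ) (ωY : Y → Y → ℝ) (n : ℕ)
    (R : Set (X × Y)) (hR : ∀ x, ∃ y, (x, y) ∈ R) (D : ℝ≥0∞)
    (hD : ∀ p ∈ R, ∀ q ∈ R, (‖ωX p.1 q.1 - ωY p.2 q.2‖₊ : ℝ≥0∞) ≤ D) :
    ∀ A ∈ motifSet ωX n, EMetric.infEdist A (motifSet ωY n) ≤ D := by
  rintro A ⟨f, rfl⟩
  choose g hg using fun i => hR (f i)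
  refine le_trans (EMetric.infEdist_le_edist_of_mem ⟨g, rfl⟩) ?_
  rw [edist_pi_le_iff]
  intro i
  rw [edist_pi_le_iff]
  intro j
  rw [edist_eq_enorm_sub]
  exact hD (f i, g i) (hg i) (f j, g j) (hg j)

theorem motifSet_lipschitz {X Y : Type*} [Fintype X] [Fintype Y]
    [Nonempty X] [Nonempty Y] (ωX : X → X → ℝ) (ωY : Y → Y → ℝ) (n : ℕ) :
    EMetric.hausdorffEdist (motifSet ωX n) (motifSet ωY n) ≤ 2 * dN ωX ωY := by
  rw [dN, ← mul_assoc, show (2:ℝ≥0∞) * (1/2) = 1 by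
    rw [one_div, ENNReal.mul_inv_cancel two_ne_zero ENNReal.ofNat_ne_top], one_mul]
  refine le_iInf₂ fun R hR => ?_
  refine EMetric.hausdorffEdist_le_of_infEdist ?_ ?_
  · exact infEdist_motif_le ωX ωY n R hR.1 _
      (fun p hp q hq => le_iSup₂_of_le p hp <| le_iSup₂_of_le q hq le_rfl)
  · refine infEdist_motif_le ωY ωX n (Prod.swap '' R) ?_ _ ?_
    · intro y; obtain ⟨x, hx⟩ := hR.2 y; exact ⟨x, ⟨(x,y), hx, rfl⟩⟩
    · rintro p ⟨p', hp', rfl⟩ q ⟨q', hq', rfl⟩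
      rw [show ‖ωY p'.swap.1 q'.swap.1 - ωX p'.swap.2 q'.swap.2‖₊
            = ‖ωX p'.1 q'.1 - ωY p'.2 q'.2‖₊ by
        simp only [Prod.fst_swap, Prod.snd_swap]
        rw [← neg_sub, nnnorm_neg]]
      exact le_iSup₂_of_le p' hp' <| le_iSup₂_of_le q' hq' le_rfl
end
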